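/- arXiv:2205.13315 — 6 statements merged into one kernel-verified Lean document; each statement's English description precedes it below -/
import Mathlib

section
/- Let m be a natural number, Δ > 0, a ∈ ℝ, and c ∈ ℝ. If p is a real polynomial of degree at most m such that the average of p over each of the m+1 consecutive intervals [a+kΔ, a+(k+1)Δ], k = 0,…,m, equals c (i.e. ∫_{a+kΔ}^{a+(k+1)Δ} p(x) dx = cΔ for every k ∈ {0,…,m}), then p is identically equal to the constant c. -/
open Polynomial intervalIntegral

/-- A real polynomial of degree at most `m` whose averages over the `m+1`
consecutive intervals `[a + kΔ, a + (k+1)Δ]`, `k = 0, …, m`, all equal `c`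
(i.e. each integral equals `c * Δ`) is identically the constant `c`. -/
theorem stmt_0 (m : ℕ) (Δ : ℝ) (hΔ : 0 < Δ) (a c : ℝ) (p : Polynomial ℝ)
    (hdeg : p.degree ≤ (m : ℕ)) 
    (havg : ∀ k : ℕ, k ≤ m →
      (∫ x in (a + k * Δ)..(a + (k + 1) * Δ), p.eval x) = c * Δ) :
    p = Polynomial.C c := by
  classical
  -- antiderivative
  set Q : Polynomial ℝ :=
    ∑ n ∈ Finset.range (p.natDegree + 1), C (p.coeff n / (n + 1)) * X ^ (n + 1) with hQ
  have hnd : p.natDegree ≤ m := natDegree_le_iff_degree_le.2 hdeg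
  have hQderiv : Q.derivative = p := by
    rw [hQ, map_sum]
    conv_rhs => rw [p.as_sum_range' (p.natDegree + 1) (Nat.lt_succ_self _)]
    refine Finset.sum_congr rfl fun n _ => ?_
    rw [derivative_C_mul, derivative_X_pow]
    push_cast
    rw [← mul_assoc, ← C_mul, div_mul_cancel₀ _ (by positivity : ((n : ℝ) + 1) ≠ 0),
      C_mul_X_pow_eq_monomial]
  have hQdeg : Q.natDegree ≤ m + 1 := by
    refine natDegree_sum_le_of_forall_le _ _ fun n hn => ?_
    refine (natDegree_C_mul_le _ _).trans ?_
    simp only [natDegree_X_pow]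
    exact Nat.succ_le_succ (Nat.lt_succ_iff.mp (Finset.mem_range.mp hn) |>.trans hnd)
  -- integral of p = Q(v) - Q(u)
  have hint : ∀ u v : ℝ, (∫ x in u..v, p.eval x) = Q.eval v - Q.eval u := by
    intro u v
    refine intervalIntegral.integral_eq_sub_of_hasDerivAt
      (f := fun x => Q.eval x) (fun x _ => ?_)
      (p.continuous.intervalIntegrable u v)
    have := Q.hasDerivAt x
    rwa [hQderiv] at this
  -- values of Q at the grid points
  have hval : ∀ k : ℕ, k ≤ m + 1 → Q.eval (a + k * Δ) = Q.eval a + k * (c * Δ) := by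
    intro k hk
    induction k with
    | zero => simp
    | succ n ih =>
      have hn : n ≤ m := Nat.lt_succ_iff.mp hk
      have h1 := havg n hn
      rw [hint] at h1
      have h2 := ih (Nat.le_succ_of_le hn)
      push_cast
      push_cast at h1 h2
      linarith
  -- the polynomial vanishing at the grid points
  set R : Polynomial ℝ := Q - C c * X - C (Q.eval a - c * a) with hR
  have hReval : ∀ k : ℕ, k ≤ m + 1 → R.eval (a + k * Δ) = 0 := by
    intro k hk
    have := hval k hk
    simp only [hR, eval_sub, eval_mul, eval_C, eval_X, this]
    ring
  have hRdeg : R.natDegree < m + 2 := by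
    have h1 : (Q - C c * X).natDegree ≤ m + 1 :=
      (natDegree_sub_le _ _).trans (by
        simp only [max_le_iff]
        exact ⟨hQdeg, (natDegree_C_mul_le _ _).trans (by simp)⟩)
    have : R.natDegree ≤ m + 1 :=
      (natDegree_sub_le _ _).trans (by simp only [max_le_iff]; refine ⟨h1, (natDegree_C _).le.trans (by omega)⟩)
    omega
  have hR0 : R = 0 := by
    refine Polynomial.eq_zero_of_natDegree_lt_card_of_eval_eq_zero R
      (f := fun i : Fin (m + 2) => a + i * Δ) ?_ (fun i => hReval i (by omega)) ?_
    · intro i j hij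
      have : (i : ℝ) = j := by
        simp only at hij
        replace hij := mul_eq_mul_right_iff.mp (add_left_cancel hij)
        rcases hij with h | h
        · exact_mod_cast h
        · exact absurd h hΔ.ne'
      exact Fin.ext (by exact_mod_cast this)
    · simpa using hRdeg
  have h := hR0
  rw [hR, sub_sub, sub_eq_zero] at h
  have h2 := congrArg Polynomial.derivative h
  rw [hQderiv] at h2
  simpa using h2
end

section
/- Let g, η₀ ∈ ℝ and let (bᴸᵢ)_{i∈ℕ} and (bᴿᵢ)_{i∈ℕ} be real sequences (bᴿᵢ is the bathymetry value at the right side of the left interface of cell i, bᴸᵢ at the left side of its right interface). Define R : ℕ → ℝ by R₀ = 0 and R_{i+1} = Rᵢ + gη₀(bᴸᵢ − bᴿᵢ) − g((bᴸᵢ)² − (bᴿᵢ)²)/2 + gη₀(bᴿ_{i+1} − bᴸᵢ) − g((bᴿ_{i+1})² − (bᴸᵢ)²)/2, and define Kᵢ := Rᵢ + gη₀²/2 − gη₀·bᴿᵢ + g(bᴿᵢ)²/2. Then Kᵢ = K₀ for every i ∈ ℕ; that is, the cell values of the global flux are constant across all cells. -/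
/-- Telescoping identity for the lake-at-rest state: with the recursive definition of the
source integrals `Rᵢ` (left-interface values plus interface jumps), the cell values of the
global flux `Kᵢ = Rᵢ + gη₀²/2 − gη₀bᴿᵢ + g(bᴿᵢ)²/2` are the same in every cell. -/
theorem stmt_3 (g η₀ : ℝ) (bL bR : ℕ → ℝ) (R : ℕ → ℝ)
    (hR0 : R 0 = 0)
    (hRrec : ∀ i : ℕ,
      R (i + 1) = R i + g * η₀ * (bL i - bR i) - g * ((bL i) ^ 2 - (bR i) ^ 2) / 2
        + g * η₀ * (bR (i + 1) - bL i) - g * ((bR (i + 1)) ^ 2 - (bL i) ^ 2) / 2)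
    (K : ℕ → ℝ)
    (hK : ∀ i : ℕ,
      K i = R i + g * η₀ ^ 2 / 2 - g * η₀ * bR i + g * (bR i) ^ 2 / 2) :
    ∀ i : ℕ, K i = K 0 := by
  intro i
  induction i with
  | zero => rfl
  | succ n ih =>
    rw [← ih, hK n, hK (n+1), hRrec n]
    ring
end

section
/- Let q₀, g ∈ ℝ, let h, b : ℝ → ℝ be differentiable at a point x, and assume h(x) ≠ 0. Then the derivative of the momentum flux plus the bathymetry source equals h times the derivative of the energy-type quantity Υ: deriv(fun x ↦ q₀²/h(x) + g·h(x)²/2)(x) + g·h(x)·deriv b(x) = h(x) · deriv(fun x ↦ q₀²/(2·h(x)²) + g·(h(x) + b(x)))(x). -/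
/-- For differentiable `h`, `b` with `h x ≠ 0`, the derivative of the momentum flux plus the
bathymetry source equals `h` times the derivative of the energy-type quantity
`Υ = q₀²/(2h²) + g(h + b)`. -/
theorem stmt_4 (q₀ g : ℝ) (h b : ℝ → ℝ) (x : ℝ)
    (hh : DifferentiableAt ℝ h x) (hb : DifferentiableAt ℝ b x) (hx : h x ≠ 0) :
    deriv (fun y => q₀ ^ 2 / h y + g * (h y) ^ 2 / 2) x + g * h x * deriv b x
      = h x * deriv (fun y => q₀ ^ 2 / (2 * (h y) ^ 2) + g * (h y + b y)) x := by
  have hh' := hh.hasDerivAt; set h' := deriv h x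
  have hb' := hb.hasDerivAt; set b' := deriv b x
  have hx2 : (2 : ℝ) * (h x) ^ 2 ≠ 0 := by positivity
  have d1 : HasDerivAt (fun y => q₀ ^ 2 / h y + g * (h y) ^ 2 / 2)
      (-(q₀ ^ 2 * h') / (h x) ^ 2 + g * (2 * h x * h') / 2) x := by
    exact (((hasDerivAt_const x (q₀ ^ 2)).div hh' hx).add
      (((hh'.pow 2).const_mul g).div_const 2)).congr_deriv (by ring)
  have d2 : HasDerivAt (fun y => q₀ ^ 2 / (2 * (h y) ^ 2) + g * (h y + b y))
      (-(q₀ ^ 2 * (2 * (2 * h x * h'))) / (2 * (h x) ^ 2) ^ 2 + g * (h' + b')) x := by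
    exact (((hasDerivAt_const x (q₀ ^ 2)).div ((hh'.pow 2).const_mul 2) hx2).add
      ((hh'.add hb').const_mul g)).congr_deriv (by simp only [Pi.pow_apply]; ring)
  rw [d1.deriv, d2.deriv]
  field_simp
  ring
end

section
/- Let q₀, g ∈ ℝ, let I ⊆ ℝ be an open interval, and let h, b : ℝ → ℝ be differentiable on I with h(x) > 0 for all x ∈ I. If for every x ∈ I the steady momentum balance deriv(fun x ↦ q₀²/h(x) + g·h(x)²/2)(x) + g·h(x)·deriv b(x) = 0 holds, then the function Υ(x) := q₀²/(2·h(x)²) + g·(h(x) + b(x)) is constant on I. -/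
/-- On an open interval where `h` and `b` are differentiable and `h > 0`, if the frictionless
steady momentum balance `∂ₓ(q₀²/h + g h²/2) + g h ∂ₓ b = 0` holds everywhere, then
`Υ = q₀²/(2h²) + g(h + b)` is constant on the interval. -/
theorem stmt_5 (q₀ g : ℝ) (a₁ a₂ : ℝ) (h b : ℝ → ℝ)
    (hh : ∀ x ∈ Set.Ioo a₁ a₂, DifferentiableAt ℝ h x)
    (hb : ∀ x ∈ Set.Ioo a₁ a₂, DifferentiableAt ℝ b x)
    (hpos : ∀ x ∈ Set.Ioo a₁ a₂, 0 < h x)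
    (hbal : ∀ x ∈ Set.Ioo a₁ a₂,
      deriv (fun y => q₀ ^ 2 / h y + g * (h y) ^ 2 / 2) x + g * h x * deriv b x = 0) :
    ∀ x ∈ Set.Ioo a₁ a₂, ∀ y ∈ Set.Ioo a₁ a₂,
      q₀ ^ 2 / (2 * (h x) ^ 2) + g * (h x + b x)
        = q₀ ^ 2 / (2 * (h y) ^ 2) + g * (h y + b y) := by
  set Υ : ℝ → ℝ := fun y => q₀ ^ 2 / (2 * (h y) ^ 2) + g * (h y + b y) with hΥ
  have key : ∀ x ∈ Set.Ioo a₁ a₂, HasDerivAt Υ 0 x := by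
    intro x hx
    have hne : h x ≠ 0 := (hpos x hx).ne'
    have Hh := (hh x hx).hasDerivAt
    have Hb := (hb x hx).hasDerivAt
    set h' := deriv h x with hh'
    set b' := deriv b x with hb'
    have Hflux : HasDerivAt (fun y => q₀ ^ 2 / h y + g * (h y) ^ 2 / 2)
        (q₀ ^ 2 * (-h' / (h x) ^ 2) + g * (2 * h x ^ 1 * h') / 2) x := by
      have h1 : (fun y => q₀ ^ 2 / h y + g * (h y) ^ 2 / 2)
          = fun y => q₀ ^ 2 * (h y)⁻¹ + g * (h y) ^ 2 / 2 := by
        funext t; rw [div_eq_mul_inv]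
      rw [h1]
      exact ((Hh.inv hne).const_mul (q₀ ^ 2)).add (((Hh.pow 2).const_mul g).div_const 2)
    have E := hbal x hx
    rw [Hflux.deriv] at E
    have h2 : (2 : ℝ) * (h x) ^ 2 ≠ 0 := by positivity
    have HΥ : HasDerivAt Υ
        (q₀ ^ 2 * (-(2 * (2 * h x ^ 1 * h')) / (2 * (h x) ^ 2) ^ 2) + g * (h' + b')) x := by
      have h1 : Υ = fun y => q₀ ^ 2 * (2 * (h y) ^ 2)⁻¹ + g * (h y + b y) := by
        funext; simp only [hΥ, div_eq_mul_inv]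
      rw [h1]
      exact ((((Hh.pow 2).const_mul 2).inv h2).const_mul (q₀ ^ 2)).add
        ((Hh.add Hb).const_mul g)
    have hz : q₀ ^ 2 * (-(2 * (2 * h x ^ 1 * h')) / (2 * (h x) ^ 2) ^ 2) + g * (h' + b') = 0 := by
      field_simp at E ⊢
      linear_combination E
    rwa [hz] at HΥ
  intro x hx y hy
  exact (convex_Ioo a₁ a₂).is_const_of_fderivWithin_eq_zero
    (f := Υ) (fun z hz => (key z hz).differentiableAt.differentiableWithinAt)
    (fun z hz => by
      rw [fderivWithin_of_isOpen isOpen_Ioo hz, (key z hz).hasFDerivAt.fderiv]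
      ext; simp) hx hy
end

section
/- Let q₀, g ∈ ℝ, let I ⊆ ℝ be an open interval, and let h, b : ℝ → ℝ be differentiable on I with h(x) > 0 for all x ∈ I. If the function Υ(x) := q₀²/(2·h(x)²) + g·(h(x) + b(x)) is constant on I, then for every x ∈ I the steady momentum balance holds: deriv(fun x ↦ q₀²/h(x) + g·h(x)²/2)(x) + g·h(x)·deriv b(x) = 0. -/
/-- On an open interval where `h` and `b` are differentiable and `h > 0`, if
`Υ = q₀²/(2h²) + g(h + b)` is constant, then the frictionless steady momentum balance
`∂ₓ(q₀²/h + g h²/2) + g h ∂ₓ b = 0` holds at every point of the interval. -/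
theorem stmt_6 (q₀ g : ℝ) (a₁ a₂ : ℝ) (h b : ℝ → ℝ)
    (hh : ∀ x ∈ Set.Ioo a₁ a₂, DifferentiableAt ℝ h x)
    (hb : ∀ x ∈ Set.Ioo a₁ a₂, DifferentiableAt ℝ b x)
    (hpos : ∀ x ∈ Set.Ioo a₁ a₂, 0 < h x)
    (hconst : ∀ x ∈ Set.Ioo a₁ a₂, ∀ y ∈ Set.Ioo a₁ a₂,
      q₀ ^ 2 / (2 * (h x) ^ 2) + g * (h x + b x)
        = q₀ ^ 2 / (2 * (h y) ^ 2) + g * (h y + b y)) :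
    ∀ x ∈ Set.Ioo a₁ a₂,
      deriv (fun y => q₀ ^ 2 / h y + g * (h y) ^ 2 / 2) x + g * h x * deriv b x = 0 := by
  intro x hx
  have hne : h x ≠ 0 := (hpos x hx).ne'
  have hhx := hh x hx
  have hbx := hb x hx
  set h' := deriv h x with hh'
  set b' := deriv b x with hb'
  -- derivative of the momentum flux
  have hflux : HasDerivAt (fun y => q₀ ^ 2 / h y + g * (h y) ^ 2 / 2)
      (-(q₀ ^ 2) * h' / (h x) ^ 2 + g * h x * h') x := by
    have h1 : HasDerivAt (fun y => q₀ ^ 2 / h y)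
        (-(q₀ ^ 2 * h') / (h x) ^ 2) x := by
      have := (hhx.hasDerivAt.inv hne).const_mul (q₀ ^ 2)
      convert this using 1
      · rfl
      · rfl
      · rfl
      rw [← hh']; field_simp
    have h2 : HasDerivAt (fun y => g * (h y) ^ 2 / 2)
        (g * (2 * h x * h') / 2) x := by
      have := ((hhx.hasDerivAt.pow 2).const_mul g).div_const 2
      convert this using 2
      · rfl
      · rfl
      · rfl
      rw [← hh']; push_cast; ring
    have := h1.add h2
    convert this using 1
    · rfl
    · rfl
    · rfl
    ring
  -- derivative of Υ is zero since Υ is locally constant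
  have hmem : Set.Ioo a₁ a₂ ∈ nhds x := (isOpen_Ioo).mem_nhds hx
  have hUconst : deriv (fun y => q₀ ^ 2 / (2 * (h y) ^ 2) + g * (h y + b y)) x = 0 := by
    have heq : (fun y => q₀ ^ 2 / (2 * (h y) ^ 2) + g * (h y + b y)) =ᶠ[nhds x]
        (fun _ => q₀ ^ 2 / (2 * (h x) ^ 2) + g * (h x + b x)) := by
      filter_upwards [hmem] with y hy
      exact hconst y hy x hx
    rw [heq.deriv_eq]
    simp
  have hU : HasDerivAt (fun y => q₀ ^ 2 / (2 * (h y) ^ 2) + g * (h y + b y))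
      (-(q₀ ^ 2) * h' / (h x) ^ 3 + g * (h' + b')) x := by
    have h2ne : (2 : ℝ) * (h x) ^ 2 ≠ 0 := by positivity
    have h1 : HasDerivAt (fun y => q₀ ^ 2 / (2 * (h y) ^ 2))
        (-(q₀ ^ 2 * (2 * (2 * h x * h'))) / (2 * (h x) ^ 2) ^ 2) x := by
      have hd : HasDerivAt (fun y => 2 * (h y) ^ 2) (2 * (2 * h x * h')) x :=
        by
          have := (hhx.hasDerivAt.pow 2).const_mul 2
          convert this using 1
          · rfl
          · rfl
          · rfl
          rw [← hh']; push_cast; ring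
      have := (hasDerivAt_const x (q₀ ^ 2)).div hd h2ne
      simp at this
      exact this
    have h2 : HasDerivAt (fun y => g * (h y + b y)) (g * (h' + b')) x :=
      (hhx.hasDerivAt.add hbx.hasDerivAt).const_mul g
    have := h1.add h2
    convert this using 1
    · rfl
    · rfl
    · rfl
    field_simp
  have hU0 : -(q₀ ^ 2) * h' / (h x) ^ 3 + g * (h' + b') = 0 := by
    rw [← hU.deriv]; exact hUconst
  rw [hflux.deriv]
  have key : (-(q₀ ^ 2) * h' / (h x) ^ 2 + g * h x * h') + g * h x * b'
      = h x * (-(q₀ ^ 2) * h' / (h x) ^ 3 + g * (h' + b')) := by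
    field_simp
    ring
  rw [key, hU0, mul_zero]
end

section
/- Let g > 0 and q, c ∈ ℝ with q ≠ 0 and 27·g·q⁴ < 8·c³. Then the equation q²/h + g·h²/2 = c has exactly two solutions with h > 0; that is, there exist h₁, h₂ with 0 < h₁ < h₂, q²/hᵢ + g·hᵢ²/2 = c for i = 1,2, and every h > 0 satisfying the equation equals h₁ or h₂. -/
/-- Continuity of the flux function on a positive interval. -/
lemma flux_contOn (g q a b : ℝ) (ha : 0 < a) :
    ContinuousOn (fun h : ℝ => q ^ 2 / h + g * h ^ 2 / 2) (Set.Icc a b) := by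
  apply ContinuousOn.add
  · exact continuousOn_const.div continuousOn_id
      (fun x hx => ne_of_gt (lt_of_lt_of_le ha hx.1))
  · exact (continuousOn_const.mul (continuousOn_pow 2)).div_const 2

/-- Under the determinant condition `27 g q⁴ < 8 c³` with `q ≠ 0`, the equation
`q²/h + g h²/2 = c` has exactly two positive solutions (subcritical and supercritical). -/
theorem stmt_10 (g q c : ℝ) (hg : 0 < g) (hq : q ≠ 0)
    (hdet : 27 * g * q ^ 4 < 8 * c ^ 3) :
    ∃ h₁ h₂ : ℝ, 0 < h₁ ∧ h₁ < h₂ ∧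
      q ^ 2 / h₁ + g * h₁ ^ 2 / 2 = c ∧
      q ^ 2 / h₂ + g * h₂ ^ 2 / 2 = c ∧
      ∀ h : ℝ, 0 < h → q ^ 2 / h + g * h ^ 2 / 2 = c → h = h₁ ∨ h = h₂ := by
  set f : ℝ → ℝ := fun h => q ^ 2 / h + g * h ^ 2 / 2 with hf
  have hq2 : 0 < q ^ 2 := by positivity
  have hc : 0 < c := by
    by_contra hle; push_neg at hle
    have h1 : c ^ 3 ≤ 0 := by nlinarith [sq_nonneg c]
    nlinarith [mul_pos hg (pow_pos hq2 2), sq_abs q, pow_pos hq2 2]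
  -- the cube root of q²/g, location of the minimum
  set s : ℝ := (q ^ 2 / g) ^ ((1 : ℝ) / 3) with hs
  have hs0 : 0 < s := Real.rpow_pos_of_pos (by positivity) _
  have hs3 : s ^ 3 = q ^ 2 / g := by
    rw [hs, ← Real.rpow_natCast ((q ^ 2 / g) ^ ((1 : ℝ) / 3)) 3,
      ← Real.rpow_mul (by positivity)]
    norm_num
  have hq2s : q ^ 2 = g * s ^ 3 := by
    field_simp at hs3; linarith
  -- value at the minimum: f s = (3/2) g s² < c
  have hfs : f s = 3 / 2 * (g * s ^ 2) := by
    have : q ^ 2 / s = g * s ^ 2 := by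
      rw [hq2s]; field_simp
    simp only [hf, this]; ring
  have hmin : f s < c := by
    rw [hfs]
    by_contra hle
    push_neg at hle
    have h2 : 2 * c ≤ 3 * (g * s ^ 2) := by linarith
    have h3 : (2 * c) ^ 3 ≤ (3 * (g * s ^ 2)) ^ 3 :=
      pow_le_pow_left₀ (by linarith) h2 3
    have hq4 : q ^ 4 = (g * s ^ 3) ^ 2 := by rw [← hq2s]; ring
    have : 27 * g * q ^ 4 = (3 * (g * s ^ 2)) ^ 3 := by rw [hq4]; ring
    nlinarith
  -- left endpoint: small h₀ with f h₀ ≥ c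
  set a : ℝ := min s (q ^ 2 / c) with ha
  have ha0 : 0 < a := lt_min hs0 (by positivity)
  have haq : f a ≥ c := by
    have h1 : q ^ 2 / a ≥ c := by
      rw [ge_iff_le, le_div_iff₀ ha0]
      calc c * a ≤ c * (q ^ 2 / c) := by
            exact mul_le_mul_of_nonneg_left (min_le_right _ _) hc.le
        _ = q ^ 2 := by field_simp
    have h2 : 0 ≤ g * a ^ 2 / 2 := by positivity
    simp only [hf]; linarith
  have has : a ≤ s := min_le_left _ _
  -- right endpoint: big b with f b ≥ c
  obtain ⟨b, hsb, hsq⟩ : ∃ b, s < b ∧ Real.sqrt (2 * c / g) < b :=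
    ⟨max s (Real.sqrt (2 * c / g)) + 1,
      by linarith [le_max_left s (Real.sqrt (2 * c / g))],
      by linarith [le_max_right s (Real.sqrt (2 * c / g))]⟩
  have hb0 : 0 < b := hs0.trans hsb
  have hbq : f b ≥ c := by
    have h1 : 2 * c / g < b ^ 2 := by
      have := Real.sq_sqrt (show (0:ℝ) ≤ 2 * c / g by positivity)
      nlinarith [Real.sqrt_nonneg (2 * c / g)]
    have h1' : 2 * c < b ^ 2 * g := (div_lt_iff₀ hg).mp h1
    have h2 : c ≤ g * b ^ 2 / 2 := by nlinarith
    have h3 : 0 ≤ q ^ 2 / b := by positivity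
    simp only [hf]; linarith
  -- IVT on [a, s]
  obtain ⟨h₁, hh₁mem, hh₁⟩ := intermediate_value_Icc' has (flux_contOn g q a s ha0)
    (Set.mem_Icc.mpr ⟨hmin.le, haq⟩)
  -- IVT on [s, b]
  obtain ⟨h₂, hh₂mem, hh₂⟩ := intermediate_value_Icc hsb.le (flux_contOn g q s b hs0)
    (Set.mem_Icc.mpr ⟨hmin.le, hbq⟩)
  have hh₁' : q ^ 2 / h₁ + g * h₁ ^ 2 / 2 = c := hh₁
  have hh₂' : q ^ 2 / h₂ + g * h₂ ^ 2 / 2 = c := hh₂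
  have hmin' : q ^ 2 / s + g * s ^ 2 / 2 < c := hmin
  have hh₁0 : 0 < h₁ := lt_of_lt_of_le ha0 hh₁mem.1
  have hh₁s : h₁ < s := lt_of_le_of_ne hh₁mem.2
    (fun heq => by rw [heq] at hh₁'; linarith)
  have hh₂s : s < h₂ := lt_of_le_of_ne hh₂mem.1
    (fun heq => by rw [← heq] at hh₂'; linarith)
  have hh₂0 : 0 < h₂ := hs0.trans hh₂s
  have h12 : h₁ < h₂ := hh₁s.trans hh₂s
  refine ⟨h₁, h₂, hh₁0, h12, hh₁', hh₂', ?_⟩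
  -- uniqueness
  intro h hh0 hroot
  by_contra hcon
  push_neg at hcon
  obtain ⟨hne1, hne2⟩ := hcon
  -- polynomial form: multiply the equation by 2x
  have P : ∀ x : ℝ, 0 < x → q ^ 2 / x + g * x ^ 2 / 2 = c →
      g * x ^ 3 - 2 * c * x + 2 * q ^ 2 = 0 := by
    intro x hx hfx
    have hxne : x ≠ 0 := hx.ne'
    field_simp at hfx
    linarith [hfx]
  have P1 := P h₁ hh₁0 hh₁'
  have P2 := P h₂ hh₂0 hh₂'
  have P3 := P h hh0 hroot
  have E1 : g * (h₁ ^ 2 + h₁ * h₂ + h₂ ^ 2) = 2 * c := by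
    have hd : h₁ - h₂ ≠ 0 := sub_ne_zero.mpr h12.ne
    have hz : (h₁ - h₂) * (g * (h₁ ^ 2 + h₁ * h₂ + h₂ ^ 2) - 2 * c) = 0 := by
      linear_combination P1 - P2
    have := (mul_eq_zero.mp hz).resolve_left hd
    linarith
  have E2 : g * (h₁ ^ 2 + h₁ * h + h ^ 2) = 2 * c := by
    have hd : h₁ - h ≠ 0 := sub_ne_zero.mpr (Ne.symm hne1)
    have hz : (h₁ - h) * (g * (h₁ ^ 2 + h₁ * h + h ^ 2) - 2 * c) = 0 := by
      linear_combination P1 - P3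
    have := (mul_eq_zero.mp hz).resolve_left hd
    linarith
  have E3 : h₁ + h₂ + h = 0 := by
    have hd : h₂ - h ≠ 0 := sub_ne_zero.mpr (Ne.symm hne2)
    have hz : (h₂ - h) * (g * (h₁ + h₂ + h)) = 0 := by
      linear_combination E1 - E2
    have := (mul_eq_zero.mp hz).resolve_left hd
    have := (mul_eq_zero.mp this).resolve_left hg.ne'
    linarith
  linarith
end
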